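/- Suppose a random variable ζ satisfies E[|ζ|^ℓ] ≤ C^ℓ ℓ^{γℓ} for all ℓ ∈ ℕ, for some constants C > 0 and 0 < γ < 2/3. Then there exist constants C' > 0 and 2 < γ' < 3 depending only on C and γ such that E[e^{vζ}] ≤ exp(v E[ζ] + C'(v² + |v|^{γ'})) for all v ∈ ℝ. -/

import Mathlib

set_option maxHeartbeats 1000000

open MeasureTheory

lemma aux_one_add_le_exp {u : ℝ} (hu : 0 ≤ u) : 1 + u + u^2/2 ≤ Real.exp u := by
  have h := Real.sum_le_exp_of_nonneg hu 3
  norm_num [Finset.sum_range_succ, Nat.factorial] at h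
  nlinarith [h]

lemma aux_sq_le (u : ℝ) (hu : 0 ≤ u) : u^2 ≤ 2 * Real.exp u := by
  nlinarith [aux_one_add_le_exp hu]

lemma aux_exp_neg {t : ℝ} (ht : t ≤ 0) : Real.exp t ≤ 1 + t + t^2/2 := by
  have h := aux_one_add_le_exp (neg_nonneg.2 ht)
  rw [Real.exp_neg] at h
  have hpos : (0:ℝ) < Real.exp t := Real.exp_pos t
  have h3 : Real.exp t * (1 + -t + (-t)^2/2) ≤ 1 := by
    calc Real.exp t * (1 + -t + (-t)^2/2) ≤ Real.exp t * (Real.exp t)⁻¹ :=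
          mul_le_mul_of_nonneg_left h hpos.le
      _ = 1 := mul_inv_cancel₀ hpos.ne'
  nlinarith [sq_nonneg t, sq_nonneg (t*t)]

lemma aux_exp_le (t : ℝ) : Real.exp t ≤ 1 + t + 2*t^2*Real.exp |t| := by
  rcases le_or_gt t 0 with h|h
  · rw [abs_of_nonpos h]
    have h1 : (1:ℝ) ≤ Real.exp (-t) := Real.one_le_exp (by linarith)
    nlinarith [aux_exp_neg h, sq_nonneg t]
  · rw [abs_of_pos h]
    have he1 : (1:ℝ) ≤ Real.exp t := Real.one_le_exp h.le
    rcases le_or_gt t 1 with h1|h1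
    · have hb := Real.exp_bound' h.le h1 (n := 2) (by norm_num)
      norm_num [Finset.sum_range_succ, Nat.factorial] at hb
      nlinarith [sq_nonneg t]
    · have h2 : (1:ℝ) * Real.exp t ≤ (2*t^2) * Real.exp t :=
        mul_le_mul_of_nonneg_right (by nlinarith) (Real.exp_pos t).le
      nlinarith [h2]

lemma aux_kpow (k : ℕ) : (k:ℝ)^k ≤ Real.exp k * k.factorial := by
  have h := Real.sum_le_exp_of_nonneg (Nat.cast_nonneg k : (0:ℝ) ≤ k) (k+1)
  have h2 : ((k:ℝ)^k / k.factorial) ≤ ∑ i ∈ Finset.range (k+1), (k:ℝ)^i / i.factorial :=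
    Finset.single_le_sum (f := fun i => (k:ℝ)^i / i.factorial)
      (fun i _ => by positivity) (Finset.self_mem_range_succ k)
  have h3 : (0:ℝ) < k.factorial := by positivity
  rw [div_le_iff₀ h3] at h2
  calc (k:ℝ)^k ≤ (∑ i ∈ Finset.range (k+1), (k:ℝ)^i / i.factorial) * k.factorial := h2
    _ ≤ Real.exp k * k.factorial := mul_le_mul_of_nonneg_right h h3.le

lemma aux_summable {C q γ : ℝ} (hC : 1 ≤ C) (hq1 : 1 < q) (hq2 : q < 2) (hγ0 : 0 < γ)
    (hγ1 : γ < 1) (hγq : γ * q < 1) :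
    Summable (fun k : ℕ =>
      (1 + C ^ (⌈q * (k:ℝ)⌉₊) * ((⌈q * (k:ℝ)⌉₊ : ℝ)) ^ (γ * (⌈q * (k:ℝ)⌉₊ : ℝ)))
        / (q ^ k * (k.factorial : ℝ))) := by
  have hC0 : (0:ℝ) < C := lt_of_lt_of_le zero_lt_one hC
  have hq0 : (0:ℝ) < q := lt_trans zero_lt_one hq1
  have hδ : (0:ℝ) < 1 - γ * q := by linarith
  set A : ℝ := 3 * Real.log C + γ * q * Real.log 3 + Real.log 3 + 2 + Real.log 2 with hA
  set k₀ : ℕ := max 1 ⌈Real.exp (A / (1 - γ * q))⌉₊ with hk₀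
  have key : ∀ k : ℕ, k₀ ≤ k →
      C ^ (⌈q * (k:ℝ)⌉₊) * ((⌈q * (k:ℝ)⌉₊ : ℝ)) ^ (γ * (⌈q * (k:ℝ)⌉₊ : ℝ)) / (k.factorial : ℝ)
        ≤ (1/2 : ℝ) ^ k := by
    intro k hk
    have hk1 : 1 ≤ k := le_trans (le_max_left _ _) hk
    have hkR : (1:ℝ) ≤ (k:ℝ) := by exact_mod_cast hk1
    have hkpos : (0:ℝ) < (k:ℝ) := by linarith
    have hlogk : A / (1 - γ * q) ≤ Real.log k := by
      refine (Real.le_log_iff_exp_le hkpos).2 ?_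
      calc Real.exp (A / (1 - γ * q)) ≤ (⌈Real.exp (A / (1 - γ * q))⌉₊ : ℝ) := Nat.le_ceil _
        _ ≤ (k:ℝ) := by exact_mod_cast le_trans (le_max_right _ _) hk
    set n : ℕ := ⌈q * (k:ℝ)⌉₊ with hn
    have hnpos : 0 < n := Nat.ceil_pos.2 (by positivity)
    have hN1 : (1:ℝ) ≤ (n:ℝ) := by exact_mod_cast hnpos
    have hN0 : (0:ℝ) < (n:ℝ) := by linarith
    have hNle : (n:ℝ) ≤ q * k + 1 := (Nat.ceil_lt_add_one (by positivity)).le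
    have hN3 : (n:ℝ) ≤ 3 * k := by nlinarith
    have hfac : (0:ℝ) < (k.factorial : ℝ) := by positivity
    have hlhs : (0:ℝ) < C ^ n * (n:ℝ) ^ (γ * (n:ℝ)) / (k.factorial : ℝ) := by positivity
    have hlog : Real.log (C ^ n * (n:ℝ) ^ (γ * (n:ℝ)) / (k.factorial : ℝ))
        = n * Real.log C + (γ * n) * Real.log n - Real.log (k.factorial : ℝ) := by
      rw [Real.log_div (by positivity) (by positivity),
        Real.log_mul (by positivity) (by positivity), Real.log_pow,
        Real.log_rpow hN0]
    have hfactlog : (k:ℝ) * Real.log k - k ≤ Real.log (k.factorial : ℝ) := by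
      have h := Real.log_le_log (by positivity) (aux_kpow k)
      rw [Real.log_pow, Real.log_mul (Real.exp_ne_zero _) (by positivity), Real.log_exp] at h
      linarith
    have hlogn_le : Real.log (n:ℝ) ≤ Real.log 3 + Real.log k := by
      have h := Real.log_le_log hN0 hN3
      rwa [Real.log_mul (by norm_num) (by positivity)] at h
    have hlogn0 : 0 ≤ Real.log (n:ℝ) := Real.log_nonneg hN1
    have hlogk0 : 0 ≤ Real.log (k:ℝ) := Real.log_nonneg hkR
    have hlogkk : Real.log (k:ℝ) ≤ (k:ℝ) := (Real.log_le_sub_one_of_pos hkpos).trans (by linarith)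
    have hlogC0 : 0 ≤ Real.log C := Real.log_nonneg hC
    have hlog3 : 0 ≤ Real.log 3 := Real.log_nonneg (by norm_num)
    have hlog2 : 0 ≤ Real.log 2 := Real.log_nonneg (by norm_num)
    have h2 : (γ * (n:ℝ)) * Real.log n ≤ γ * ((q * k + 1) * (Real.log 3 + Real.log k)) := by
      have hmm : (n:ℝ) * Real.log n ≤ (q * k + 1) * (Real.log 3 + Real.log k) :=
        mul_le_mul hNle hlogn_le hlogn0 (by positivity)
      calc (γ * (n:ℝ)) * Real.log n = γ * ((n:ℝ) * Real.log n) := by ring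
        _ ≤ _ := mul_le_mul_of_nonneg_left hmm hγ0.le
    have h3 : (n:ℝ) * Real.log C ≤ 3 * k * Real.log C := mul_le_mul_of_nonneg_right hN3 hlogC0
    have hAd : A ≤ (1 - γ * q) * Real.log k := by
      rw [div_le_iff₀ hδ] at hlogk; linarith
    have hAdk : (k:ℝ) * A ≤ (k:ℝ) * ((1 - γ * q) * Real.log k) :=
      mul_le_mul_of_nonneg_left hAd (by positivity)
    have hg3 : γ * Real.log 3 ≤ (k:ℝ) * Real.log 3 :=
      mul_le_mul_of_nonneg_right (by linarith) hlog3
    have hgk : γ * Real.log k ≤ (k:ℝ) := by nlinarith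
    rw [hA] at hAdk
    have main : Real.log (C ^ n * (n:ℝ) ^ (γ * (n:ℝ)) / (k.factorial : ℝ))
        ≤ (k:ℝ) * Real.log (1/2) := by
      have hhalf : Real.log (1/2 : ℝ) = -Real.log 2 := by
        rw [one_div, Real.log_inv]
      rw [hlog, hhalf]
      linarith [hAdk, h2, h3, hfactlog, hg3, hgk]
    have := Real.exp_le_exp.2 main
    rw [Real.exp_log hlhs] at this
    calc C ^ n * (n:ℝ) ^ (γ * (n:ℝ)) / (k.factorial : ℝ)
        ≤ Real.exp ((k:ℝ) * Real.log (1/2)) := this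
      _ = (1/2 : ℝ) ^ k := by
          rw [Real.exp_nat_mul, Real.exp_log (by norm_num : (0:ℝ) < 1/2)]
  have hsum_a : Summable (fun k : ℕ =>
      C ^ (⌈q * (k:ℝ)⌉₊) * ((⌈q * (k:ℝ)⌉₊ : ℝ)) ^ (γ * (⌈q * (k:ℝ)⌉₊ : ℝ)) / (k.factorial : ℝ)) := by
    rw [← summable_nat_add_iff k₀]
    refine Summable.of_nonneg_of_le (fun k => by positivity) (fun k => ?_)
      (summable_geometric_of_lt_one (by norm_num) (by norm_num : (1/2:ℝ) < 1))
    calc C ^ (⌈q * ((k + k₀ : ℕ):ℝ)⌉₊) * ((⌈q * ((k + k₀ : ℕ):ℝ)⌉₊ : ℝ)) ^ (γ * (⌈q * ((k + k₀ : ℕ):ℝ)⌉₊ : ℝ)) / (((k + k₀ : ℕ).factorial : ℝ))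
        ≤ (1/2 : ℝ) ^ (k + k₀) := key (k + k₀) (Nat.le_add_left _ _)
      _ ≤ (1/2 : ℝ) ^ k := pow_le_pow_of_le_one (by norm_num) (by norm_num) (Nat.le_add_right _ _)
  have hsum_inv : Summable (fun k : ℕ => 1 / (k.factorial : ℝ)) := by
    simpa using Real.summable_pow_div_factorial 1
  refine Summable.of_nonneg_of_le (fun k => by positivity) (fun k => ?_) (hsum_inv.add hsum_a)
  have hqk : (1:ℝ) ≤ q ^ k := one_le_pow₀ hq1.le
  have hfac : (0:ℝ) < (k.factorial : ℝ) := by positivity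
  have hM0 : 0 ≤ C ^ (⌈q * (k:ℝ)⌉₊) * ((⌈q * (k:ℝ)⌉₊ : ℝ)) ^ (γ * (⌈q * (k:ℝ)⌉₊ : ℝ)) := by positivity
  calc (1 + C ^ (⌈q * (k:ℝ)⌉₊) * ((⌈q * (k:ℝ)⌉₊ : ℝ)) ^ (γ * (⌈q * (k:ℝ)⌉₊ : ℝ)))
        / (q ^ k * (k.factorial : ℝ))
      ≤ (1 + C ^ (⌈q * (k:ℝ)⌉₊) * ((⌈q * (k:ℝ)⌉₊ : ℝ)) ^ (γ * (⌈q * (k:ℝ)⌉₊ : ℝ)))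
        / (1 * (k.factorial : ℝ)) := by
        apply div_le_div_of_nonneg_left (by positivity) (by positivity)
        exact mul_le_mul_of_nonneg_right hqk hfac.le
    _ = 1 / (k.factorial : ℝ)
        + C ^ (⌈q * (k:ℝ)⌉₊) * ((⌈q * (k:ℝ)⌉₊ : ℝ)) ^ (γ * (⌈q * (k:ℝ)⌉₊ : ℝ)) / (k.factorial : ℝ) := by
        rw [one_mul, add_div]

lemma aux_star {C γ q : ℝ} (hC : 0 < C) (hγ0 : 0 < γ) (hγ1 : γ < 1) (hq1 : 1 < q) (hq2 : q < 2)
    (hγq : γ * q < 1) :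
    ∃ K : ℝ, 2 ≤ K ∧ ∀ {Ω : Type} [MeasurableSpace Ω] (P : Measure Ω),
      IsProbabilityMeasure P → ∀ ζ : Ω → ℝ, Measurable ζ →
      (∀ ℓ : ℕ, 1 ≤ ℓ → Integrable (fun ω => |ζ ω| ^ ℓ) P) →
      (∀ ℓ : ℕ, 1 ≤ ℓ → ∫ ω, |ζ ω| ^ ℓ ∂P ≤ C ^ ℓ * (ℓ : ℝ) ^ (γ * ℓ)) →
      ∫⁻ ω, ENNReal.ofReal (Real.exp (|ζ ω| ^ q / q)) ∂P ≤ ENNReal.ofReal K := by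
  have hq0 : (0:ℝ) < q := lt_trans zero_lt_one hq1
  set C₁ : ℝ := max C 1 with hC₁
  have hC₁1 : (1:ℝ) ≤ C₁ := le_max_right _ _
  have hC₁0 : (0:ℝ) < C₁ := lt_of_lt_of_le zero_lt_one hC₁1
  have hsum := aux_summable (C := C₁) (q := q) (γ := γ) hC₁1 hq1 hq2 hγ0 hγ1 hγq
  set u : ℕ → ℝ := fun k =>
    (1 + C₁ ^ (⌈q * (k:ℝ)⌉₊) * ((⌈q * (k:ℝ)⌉₊ : ℝ)) ^ (γ * (⌈q * (k:ℝ)⌉₊ : ℝ)))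
      / (q ^ k * (k.factorial : ℝ)) with hu
  have hpos : ∀ k, 0 ≤ u k := fun k => by positivity
  have hu0 : u 0 = 2 := by
    simp [hu, Real.rpow_zero]
    norm_num
  refine ⟨∑' k, u k, ?_, ?_⟩
  · calc (2:ℝ) = u 0 := hu0.symm
      _ ≤ ∑' k, u k := Summable.le_tsum hsum 0 (fun j _ => hpos j)
  intro Ω _ P hP ζ hmeas hint hmom
  haveI := hP
  have hmg : ∀ k : ℕ, Measurable fun ω =>
      ENNReal.ofReal ((|ζ ω| ^ q / q) ^ k / (k.factorial : ℝ)) := by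
    intro k
    exact ((((Real.continuous_rpow_const hq0.le).measurable.comp
      hmeas.abs).div_const q).pow_const k).div_const _ |>.ennreal_ofReal
  have hexp : ∀ ω, ENNReal.ofReal (Real.exp (|ζ ω| ^ q / q))
      = ∑' k : ℕ, ENNReal.ofReal ((|ζ ω| ^ q / q) ^ k / (k.factorial : ℝ)) := by
    intro ω
    have h1 : Real.exp (|ζ ω| ^ q / q) = ∑' k : ℕ, (|ζ ω| ^ q / q) ^ k / (k.factorial : ℝ) := by
      rw [Real.exp_eq_exp_ℝ, NormedSpace.exp_eq_tsum_div]
    rw [h1, ENNReal.ofReal_tsum_of_nonneg (fun k => by positivity)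
      (Real.summable_pow_div_factorial _)]
  have hsplit : ∫⁻ ω, ENNReal.ofReal (Real.exp (|ζ ω| ^ q / q)) ∂P
      = ∑' k : ℕ, ∫⁻ ω, ENNReal.ofReal ((|ζ ω| ^ q / q) ^ k / (k.factorial : ℝ)) ∂P := by
    simp_rw [hexp]
    exact lintegral_tsum (fun k => (hmg k).aemeasurable)
  have hterm : ∀ k : ℕ,
      ∫⁻ ω, ENNReal.ofReal ((|ζ ω| ^ q / q) ^ k / (k.factorial : ℝ)) ∂P
        ≤ ENNReal.ofReal (u k) := by
    intro k
    rcases Nat.eq_zero_or_pos k with rfl | hk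
    · simp only [pow_zero, Nat.factorial_zero, Nat.cast_one, div_one, ENNReal.ofReal_one]
      rw [lintegral_one, measure_univ, hu0]
      exact ENNReal.one_le_ofReal.2 one_le_two
    · have hkR : (1:ℝ) ≤ (k:ℝ) := by exact_mod_cast hk
      set n := ⌈q * (k:ℝ)⌉₊ with hn
      have hn1 : 1 ≤ n := Nat.ceil_pos.2 (by nlinarith)
      have hN0 : (0:ℝ) < (n:ℝ) := by exact_mod_cast hn1
      have hfac : (0:ℝ) < (k.factorial : ℝ) := by positivity
      have hrw : ∀ ω, ((|ζ ω| ^ q / q) ^ k / (k.factorial : ℝ))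
          = (1 / (q ^ k * (k.factorial : ℝ))) * (|ζ ω| ^ (q * (k:ℝ))) := by
        intro ω
        have habs : (0:ℝ) ≤ |ζ ω| := abs_nonneg _
        have h1 : (|ζ ω| ^ q) ^ (k:ℕ) = |ζ ω| ^ (q * (k:ℝ)) := by
          rw [← Real.rpow_natCast (|ζ ω| ^ q) k, ← Real.rpow_mul habs]
        rw [div_pow, h1]
        ring
      have hmain : ∫⁻ ω, ENNReal.ofReal (|ζ ω| ^ (q * (k:ℝ))) ∂P
          ≤ ENNReal.ofReal (1 + C₁ ^ n * ((n:ℝ)) ^ (γ * (n:ℝ))) := by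
        have hint' : Integrable (fun ω => 1 + |ζ ω| ^ (n:ℕ)) P :=
          (integrable_const (1:ℝ)).add (hint n hn1)
        have hpt : ∀ ω, ENNReal.ofReal (|ζ ω| ^ (q * (k:ℝ)))
            ≤ ENNReal.ofReal (1 + |ζ ω| ^ (n:ℕ)) := by
          intro ω
          apply ENNReal.ofReal_le_ofReal
          have habs : (0:ℝ) ≤ |ζ ω| := abs_nonneg _
          have hp2 : (0:ℝ) ≤ |ζ ω| ^ (n:ℕ) := by positivity
          rcases le_or_gt (|ζ ω|) 1 with h1 | h1
          · have := Real.rpow_le_one habs h1 (by positivity : (0:ℝ) ≤ q * (k:ℝ))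
            linarith
          · have hle : q * (k:ℝ) ≤ (n:ℝ) := Nat.le_ceil _
            have h2 := Real.rpow_le_rpow_of_exponent_le h1.le hle
            rw [Real.rpow_natCast] at h2
            linarith
        calc ∫⁻ ω, ENNReal.ofReal (|ζ ω| ^ (q * (k:ℝ))) ∂P
            ≤ ∫⁻ ω, ENNReal.ofReal (1 + |ζ ω| ^ (n:ℕ)) ∂P := lintegral_mono hpt
          _ = ENNReal.ofReal (∫ ω, (1 + |ζ ω| ^ (n:ℕ)) ∂P) :=
              (ofReal_integral_eq_lintegral_ofReal hint'
                (ae_of_all _ fun ω => by positivity)).symm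
          _ ≤ ENNReal.ofReal (1 + C₁ ^ n * ((n:ℝ)) ^ (γ * (n:ℝ))) := by
              apply ENNReal.ofReal_le_ofReal
              rw [integral_add (integrable_const (1:ℝ)) (hint n hn1)]
              simp only [integral_const, measure_univ, ENNReal.toReal_one, probReal_univ, smul_eq_mul, one_mul]
              have hm := hmom n hn1
              have hCle : C ^ n ≤ C₁ ^ n := pow_le_pow_left₀ hC.le (le_max_left C 1) n
              have hrp : (0:ℝ) ≤ ((n:ℝ)) ^ (γ * (n:ℝ)) := Real.rpow_nonneg hN0.le _
              nlinarith [mul_le_mul_of_nonneg_right hCle hrp]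
      calc ∫⁻ ω, ENNReal.ofReal ((|ζ ω| ^ q / q) ^ k / (k.factorial : ℝ)) ∂P
          = ENNReal.ofReal (1 / (q ^ k * (k.factorial : ℝ)))
            * ∫⁻ ω, ENNReal.ofReal (|ζ ω| ^ (q * (k:ℝ))) ∂P := by
            simp_rw [hrw, ENNReal.ofReal_mul
              (by positivity : (0:ℝ) ≤ 1 / (q ^ k * (k.factorial : ℝ)))]
            exact lintegral_const_mul' _ _ ENNReal.ofReal_ne_top
        _ ≤ ENNReal.ofReal (1 / (q ^ k * (k.factorial : ℝ)))
            * ENNReal.ofReal (1 + C₁ ^ n * ((n:ℝ)) ^ (γ * (n:ℝ))) :=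
            by gcongr
        _ = ENNReal.ofReal (u k) := by
            rw [← ENNReal.ofReal_mul (by positivity : (0:ℝ) ≤ 1 / (q ^ k * (k.factorial : ℝ)))]
            congr 1
            simp only [hu]
            ring
  rw [hsplit]
  calc ∑' k : ℕ, ∫⁻ ω, ENNReal.ofReal ((|ζ ω| ^ q / q) ^ k / (k.factorial : ℝ)) ∂P
      ≤ ∑' k : ℕ, ENNReal.ofReal (u k) := ENNReal.tsum_le_tsum hterm
    _ = ENNReal.ofReal (∑' k, u k) :=
        (ENNReal.ofReal_tsum_of_nonneg hpos hsum).symm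

/-- If a random variable `ζ` satisfies `E[|ζ|^ℓ] ≤ C^ℓ ℓ^{γℓ}` for all `ℓ ∈ ℕ` with
`C > 0` and `0 < γ < 2/3`, then there are constants `C' > 0` and `2 < γ' < 3`,
depending only on `C` and `γ`, such that
`E[e^{vζ}] ≤ exp (v E[ζ] + C' (v² + |v|^{γ'}))` for all real `v`. -/
theorem mgf_bound_of_moment_growth (C γ : ℝ) (hC : 0 < C) (hγ0 : 0 < γ) (hγ : γ < 2 / 3) :
    ∃ C' γ' : ℝ, 0 < C' ∧ 2 < γ' ∧ γ' < 3 ∧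
      ∀ {Ω : Type} [MeasurableSpace Ω] (P : Measure Ω), IsProbabilityMeasure P →
        ∀ ζ : Ω → ℝ, Measurable ζ → Integrable ζ P →
          (∀ ℓ : ℕ, 1 ≤ ℓ → Integrable (fun ω => |ζ ω| ^ ℓ) P) →
          (∀ ℓ : ℕ, 1 ≤ ℓ → ∫ ω, |ζ ω| ^ ℓ ∂P ≤ C ^ ℓ * (ℓ : ℝ) ^ (γ * ℓ)) →
          ∀ v : ℝ,
            ∫⁻ ω, ENNReal.ofReal (Real.exp (v * ζ ω)) ∂P ≤
              ENNReal.ofReal (Real.exp (v * (∫ ω, ζ ω ∂P) + C' * (v ^ 2 + |v| ^ γ'))) := by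
  have hγ1 : γ < 1 := by linarith
  have h1γ : 0 < 1 - γ := by linarith
  set β : ℝ := 1 / (1 - γ) with hβ
  have hβ1 : 1 < β := by rw [hβ, lt_div_iff₀ h1γ]; linarith
  have hβ3 : β < 3 := by rw [hβ, div_lt_iff₀ h1γ]; linarith
  set γ' : ℝ := (max β 2 + 3) / 2 with hγ'
  have hmax3 : max β 2 < 3 := max_lt hβ3 (by norm_num)
  have hβγ' : β < γ' := by
    have h1 : β ≤ max β 2 := le_max_left _ _
    rw [hγ']; linarith
  have hγ'2 : 2 < γ' := by
    have h1 : (2:ℝ) ≤ max β 2 := le_max_right _ _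
    rw [hγ']; linarith
  have hγ'3 : γ' < 3 := by rw [hγ']; linarith
  have hγ'0 : 0 < γ' := by linarith
  have hγ'1' : 0 < γ' - 1 := by linarith
  set q : ℝ := γ' / (γ' - 1) with hq
  have hq1 : 1 < q := by rw [hq, lt_div_iff₀ hγ'1']; linarith
  have hq2 : q < 2 := by rw [hq, div_lt_iff₀ hγ'1']; linarith
  have hγq : γ * q < 1 := by
    have h1 : 1 < γ' * (1 - γ) := by
      have h2 := mul_lt_mul_of_pos_right hβγ' h1γ
      have hβe : β * (1 - γ) = 1 := by rw [hβ]; field_simp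
      linarith
    rw [hq, mul_div_assoc', div_lt_one hγ'1']
    nlinarith
  have hconj : γ'.HolderConjugate q := by
    have h := Real.HolderConjugate.conjExponent (p := γ') (by linarith)
    rwa [Real.conjExponent, ← hq] at h
  obtain ⟨K, hK2, hKbound⟩ := aux_star hC hγ0 hγ1 hq1 hq2 hγq
  have hK0 : (0:ℝ) < K := by linarith
  have hK1 : (1:ℝ) ≤ K := by linarith
  set R : ℝ := 4 * Real.exp ((2:ℝ) ^ γ') * K with hR
  have hR0 : 0 < R := by positivity
  have hlogK0 : 0 ≤ Real.log K := Real.log_nonneg hK1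
  set C' : ℝ := R + C + 1 + Real.log K + 1 with hC'
  have hC'0 : 0 < C' := by rw [hC']; linarith
  refine ⟨C', γ', hC'0, hγ'2, hγ'3, ?_⟩
  intro Ω mΩ P hP ζ hmeas hζint hint hmom v
  haveI := hP
  have hKb := hKbound P hP ζ hmeas hint hmom
  have hyoung : ∀ (a x : ℝ), 0 ≤ a → a * |x| ≤ a ^ γ' / γ' + |x| ^ q / q := fun a x ha =>
    Real.young_inequality_of_nonneg ha (abs_nonneg x) hconj
  have hBig : ∫⁻ ω, ENNReal.ofReal (Real.exp (v * ζ ω)) ∂P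
      ≤ ENNReal.ofReal (Real.exp (|v| ^ γ' / γ') * K) := by
    have hpt : ∀ ω, ENNReal.ofReal (Real.exp (v * ζ ω))
        ≤ ENNReal.ofReal (Real.exp (|v| ^ γ' / γ') * Real.exp (|ζ ω| ^ q / q)) := by
      intro ω
      apply ENNReal.ofReal_le_ofReal
      rw [← Real.exp_add]
      apply Real.exp_le_exp.2
      calc v * ζ ω ≤ |v * ζ ω| := le_abs_self _
        _ = |v| * |ζ ω| := abs_mul _ _
        _ ≤ |v| ^ γ' / γ' + |ζ ω| ^ q / q := hyoung _ _ (abs_nonneg v)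
    calc ∫⁻ ω, ENNReal.ofReal (Real.exp (v * ζ ω)) ∂P
        ≤ ∫⁻ ω, ENNReal.ofReal (Real.exp (|v| ^ γ' / γ') * Real.exp (|ζ ω| ^ q / q)) ∂P :=
          lintegral_mono hpt
      _ = ENNReal.ofReal (Real.exp (|v| ^ γ' / γ'))
          * ∫⁻ ω, ENNReal.ofReal (Real.exp (|ζ ω| ^ q / q)) ∂P := by
          simp_rw [ENNReal.ofReal_mul (Real.exp_pos _).le]
          exact lintegral_const_mul' _ _ ENNReal.ofReal_ne_top
      _ ≤ ENNReal.ofReal (Real.exp (|v| ^ γ' / γ')) * ENNReal.ofReal K :=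
          by gcongr
      _ = ENNReal.ofReal (Real.exp (|v| ^ γ' / γ') * K) :=
          (ENNReal.ofReal_mul (Real.exp_pos _).le).symm
  rcases le_or_gt (|v|) 1 with hv | hv
  · have hemeas : Measurable fun ω => Real.exp (v * ζ ω) :=
      Real.measurable_exp.comp (hmeas.const_mul v)
    have heint : Integrable (fun ω => Real.exp (v * ζ ω)) P := by
      refine ⟨hemeas.aestronglyMeasurable, ?_⟩
      rw [hasFiniteIntegral_iff_ofReal (ae_of_all _ fun ω => (Real.exp_pos _).le)]
      exact lt_of_le_of_lt hBig ENNReal.ofReal_lt_top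
    have hgmeas : Measurable fun ω => 2 * ζ ω ^ 2 * Real.exp |ζ ω| :=
      ((hmeas.pow_const 2).const_mul 2).mul (Real.measurable_exp.comp hmeas.abs)
    have hgpt : ∀ ω, 2 * ζ ω ^ 2 * Real.exp |ζ ω|
        ≤ (4 * Real.exp ((2:ℝ) ^ γ')) * Real.exp (|ζ ω| ^ q / q) := by
      intro ω
      have h1 : ζ ω ^ 2 ≤ 2 * Real.exp |ζ ω| := by
        have h := aux_sq_le |ζ ω| (abs_nonneg _)
        rwa [sq_abs] at h
      have h2 : 2 * |ζ ω| ≤ (2:ℝ) ^ γ' / γ' + |ζ ω| ^ q / q := hyoung 2 (ζ ω) (by norm_num)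
      have h3 : (2:ℝ) ^ γ' / γ' ≤ (2:ℝ) ^ γ' :=
        div_le_self (Real.rpow_nonneg (by norm_num) _) (by linarith)
      calc 2 * ζ ω ^ 2 * Real.exp |ζ ω| ≤ 2 * (2 * Real.exp |ζ ω|) * Real.exp |ζ ω| := by
            nlinarith [Real.exp_pos (|ζ ω|)]
        _ = 4 * Real.exp (|ζ ω| + |ζ ω|) := by rw [Real.exp_add]; ring
        _ ≤ 4 * Real.exp ((2:ℝ) ^ γ' + |ζ ω| ^ q / q) := by
            have h5 : |ζ ω| + |ζ ω| ≤ (2:ℝ) ^ γ' + |ζ ω| ^ q / q := by linarith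
            have h6 := Real.exp_le_exp.2 h5
            linarith
        _ = (4 * Real.exp ((2:ℝ) ^ γ')) * Real.exp (|ζ ω| ^ q / q) := by
            rw [mul_assoc, ← Real.exp_add]
    have hglint : ∫⁻ ω, ENNReal.ofReal (2 * ζ ω ^ 2 * Real.exp |ζ ω|) ∂P ≤ ENNReal.ofReal R := by
      calc ∫⁻ ω, ENNReal.ofReal (2 * ζ ω ^ 2 * Real.exp |ζ ω|) ∂P
          ≤ ∫⁻ ω, ENNReal.ofReal ((4 * Real.exp ((2:ℝ) ^ γ')) * Real.exp (|ζ ω| ^ q / q)) ∂P :=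
            lintegral_mono (fun ω => ENNReal.ofReal_le_ofReal (hgpt ω))
        _ = ENNReal.ofReal (4 * Real.exp ((2:ℝ) ^ γ'))
            * ∫⁻ ω, ENNReal.ofReal (Real.exp (|ζ ω| ^ q / q)) ∂P := by
            simp_rw [ENNReal.ofReal_mul (by positivity : (0:ℝ) ≤ 4 * Real.exp ((2:ℝ) ^ γ'))]
            exact lintegral_const_mul' _ _ ENNReal.ofReal_ne_top
        _ ≤ ENNReal.ofReal (4 * Real.exp ((2:ℝ) ^ γ')) * ENNReal.ofReal K :=
            by gcongr
        _ = ENNReal.ofReal R := by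
            rw [← ENNReal.ofReal_mul (by positivity), hR]
    have hgnn : ∀ ω, 0 ≤ 2 * ζ ω ^ 2 * Real.exp |ζ ω| := fun ω => by positivity
    have hgint : Integrable (fun ω => 2 * ζ ω ^ 2 * Real.exp |ζ ω|) P := by
      refine ⟨hgmeas.aestronglyMeasurable, ?_⟩
      rw [hasFiniteIntegral_iff_ofReal (ae_of_all _ hgnn)]
      exact lt_of_le_of_lt hglint ENNReal.ofReal_lt_top
    have hgR : ∫ ω, 2 * ζ ω ^ 2 * Real.exp |ζ ω| ∂P ≤ R := by
      have h := (ofReal_integral_eq_lintegral_ofReal hgint (ae_of_all _ hgnn)).le.trans hglint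
      exact (ENNReal.ofReal_le_ofReal_iff hR0.le).1 h
    have hpt2 : ∀ ω, Real.exp (v * ζ ω)
        ≤ 1 + v * ζ ω + v ^ 2 * (2 * ζ ω ^ 2 * Real.exp |ζ ω|) := by
      intro ω
      have h := aux_exp_le (v * ζ ω)
      have he : Real.exp |v * ζ ω| ≤ Real.exp |ζ ω| := by
        apply Real.exp_le_exp.2
        rw [abs_mul]
        calc |v| * |ζ ω| ≤ 1 * |ζ ω| := mul_le_mul_of_nonneg_right hv (abs_nonneg _)
          _ = |ζ ω| := one_mul _
      have hmono : 2 * (v * ζ ω) ^ 2 * Real.exp |v * ζ ω| ≤ 2 * (v * ζ ω) ^ 2 * Real.exp |ζ ω| :=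
        mul_le_mul_of_nonneg_left he (by positivity)
      nlinarith [h, hmono]
    have hIeq : ∫⁻ ω, ENNReal.ofReal (Real.exp (v * ζ ω)) ∂P
        = ENNReal.ofReal (∫ ω, Real.exp (v * ζ ω) ∂P) :=
      (ofReal_integral_eq_lintegral_ofReal heint
        (ae_of_all _ fun ω => (Real.exp_pos _).le)).symm
    rw [hIeq]
    apply ENNReal.ofReal_le_ofReal
    have hrhs_int : Integrable (fun ω => 1 + v * ζ ω + v ^ 2 * (2 * ζ ω ^ 2 * Real.exp |ζ ω|)) P :=
      ((integrable_const (1:ℝ)).add (hζint.const_mul v)).add (hgint.const_mul (v ^ 2))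
    have hrpnn : (0:ℝ) ≤ |v| ^ γ' := Real.rpow_nonneg (abs_nonneg v) _
    calc ∫ ω, Real.exp (v * ζ ω) ∂P
        ≤ ∫ ω, (1 + v * ζ ω + v ^ 2 * (2 * ζ ω ^ 2 * Real.exp |ζ ω|)) ∂P :=
          integral_mono heint hrhs_int hpt2
      _ = 1 + v * ∫ ω, ζ ω ∂P + v ^ 2 * ∫ ω, 2 * ζ ω ^ 2 * Real.exp |ζ ω| ∂P := by
          have e1 : ∫ ω, (1 + v * ζ ω + v ^ 2 * (2 * ζ ω ^ 2 * Real.exp |ζ ω|)) ∂P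
              = (∫ ω, (1 + v * ζ ω) ∂P) + ∫ ω, v ^ 2 * (2 * ζ ω ^ 2 * Real.exp |ζ ω|) ∂P :=
            integral_add ((integrable_const (1:ℝ)).add (hζint.const_mul v))
              (hgint.const_mul (v ^ 2))
          have e2 : ∫ ω, (1 + v * ζ ω) ∂P = (∫ ω, (1:ℝ) ∂P) + ∫ ω, v * ζ ω ∂P :=
            integral_add (integrable_const (1:ℝ)) (hζint.const_mul v)
          rw [e1, e2]
          simp [integral_const, measure_univ, integral_const_mul]
      _ ≤ 1 + (v * ∫ ω, ζ ω ∂P + C' * (v ^ 2 + |v| ^ γ')) := by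
          have h1 : v ^ 2 * ∫ ω, 2 * ζ ω ^ 2 * Real.exp |ζ ω| ∂P ≤ v ^ 2 * R :=
            mul_le_mul_of_nonneg_left hgR (sq_nonneg v)
          have h3 : R ≤ C' := by rw [hC']; linarith
          have h4 : v ^ 2 * R ≤ C' * v ^ 2 := by nlinarith [sq_nonneg v]
          nlinarith [hrpnn, hC'0]
      _ ≤ Real.exp (v * ∫ ω, ζ ω ∂P + C' * (v ^ 2 + |v| ^ γ')) := by
          have h := Real.add_one_le_exp (v * ∫ ω, ζ ω ∂P + C' * (v ^ 2 + |v| ^ γ'))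
          linarith
  · refine le_trans hBig (ENNReal.ofReal_le_ofReal ?_)
    have hIabs : |∫ ω, ζ ω ∂P| ≤ C := by
      have h1 : |∫ ω, ζ ω ∂P| ≤ ∫ ω, |ζ ω| ∂P := by
        simpa [Real.norm_eq_abs] using norm_integral_le_integral_norm (μ := P) ζ
      have h2 := hmom 1 le_rfl
      simp only [pow_one, Nat.cast_one, mul_one, Real.one_rpow] at h2
      linarith
    have hv2 : |v| ≤ v ^ 2 := by nlinarith [abs_nonneg v, sq_abs v]
    have hvγ1 : (1:ℝ) ≤ |v| ^ γ' := by
      calc (1:ℝ) = |v| ^ (0:ℝ) := (Real.rpow_zero _).symm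
        _ ≤ |v| ^ γ' := Real.rpow_le_rpow_of_exponent_le hv.le hγ'0.le
    have hvI : -(C * v ^ 2) ≤ v * ∫ ω, ζ ω ∂P := by
      have hna := neg_abs_le (v * ∫ ω, ζ ω ∂P)
      have habs : |v * ∫ ω, ζ ω ∂P| ≤ C * v ^ 2 := by
        rw [abs_mul]
        calc |v| * |∫ ω, ζ ω ∂P| ≤ v ^ 2 * C :=
              mul_le_mul hv2 hIabs (abs_nonneg _) (sq_nonneg v)
          _ = C * v ^ 2 := by ring
      linarith
    rw [show Real.exp (|v| ^ γ' / γ') * K = Real.exp (|v| ^ γ' / γ' + Real.log K) by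
      rw [Real.exp_add, Real.exp_log hK0]]
    apply Real.exp_le_exp.2
    have h3 : |v| ^ γ' / γ' ≤ |v| ^ γ' :=
      div_le_self (Real.rpow_nonneg (abs_nonneg v) _) (by linarith)
    have h4 : Real.log K ≤ Real.log K * |v| ^ γ' := le_mul_of_one_le_right hlogK0 hvγ1
    have hrpnn : (0:ℝ) ≤ |v| ^ γ' := Real.rpow_nonneg (abs_nonneg v) _
    have h5 : (C + 1 + Real.log K) * (v ^ 2 + |v| ^ γ') ≤ C' * (v ^ 2 + |v| ^ γ') := by
      apply mul_le_mul_of_nonneg_right _ (by positivity)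
      rw [hC']; linarith
    nlinarith [sq_nonneg v, hrpnn, hlogK0, hvI, h3, h4, h5, mul_nonneg hlogK0 (sq_nonneg v),
      mul_nonneg hC.le hrpnn]
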